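/- arXiv:2412.00941 — 3 statements merged into one kernel-verified Lean document; each statement's English description precedes it below -/
import Mathlib

section
/- Consider the blind MDP with state space S = {s0, s1, bot, top} and action set A = {w, c}, with transitions: δ(s0,w) gives probability 1/2 to s0 and 1/2 to s1; δ(s1,w) = point mass at s1; δ(s0,c) = point mass at bot; δ(s1,c) = point mass at top; and bot and top are absorbing under both actions. Then for every probability distribution σ on A we have ReachProb(P_σ, top, s0) < 1, i.e., this blind MDP is not almost-sure winning for the reachability objective under memoryless policies. -/
open scoped BigOperators

/-- States of the example blind MDP. -/
inductive St | s0 | s1 | bot | top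
  deriving DecidableEq

instance : Fintype St := ⟨{St.s0, St.s1, St.bot, St.top}, fun x => by cases x <;> simp⟩

/-- Actions: wait and commit. -/
inductive Act | w | c
  deriving DecidableEq

instance : Fintype Act := ⟨{Act.w, Act.c}, fun x => by cases x <;> simp⟩

/-- Iterates whose supremum is the reachability probability. -/
noncomputable def reachAux {S : Type*} [Fintype S] [DecidableEq S]
    (P : S → S → ℝ) (t : S) : ℕ → S → ℝ
  | 0, x => if x = t then 1 else 0
  | n + 1, x => if x = t then 1 else ∑ y, P x y * reachAux P t n y

/-- Reachability probability of target `t` starting from `s` in the Markov chain `P`. -/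
noncomputable def ReachProb {S : Type*} [Fintype S] [DecidableEq S]
    (P : S → S → ℝ) (t s : S) : ℝ :=
  ⨆ n : ℕ, reachAux P t n s

/-- Transition function of the example blind MDP. -/
noncomputable def d : St → Act → St → ℝ
  | St.s0, Act.w, St.s0 => 1/2
  | St.s0, Act.w, St.s1 => 1/2
  | St.s1, Act.w, St.s1 => 1
  | St.s0, Act.c, St.bot => 1
  | St.s1, Act.c, St.top => 1
  | St.bot, _, St.bot => 1
  | St.top, _, St.top => 1
  | _, _, _ => 0

lemma sum_Act (f : Act → ℝ) : ∑ a, f a = f Act.w + f Act.c := by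
  rw [show (Finset.univ : Finset Act) = {Act.w, Act.c} from rfl]
  simp [Finset.sum_pair]

lemma sum_St (f : St → ℝ) : ∑ y, f y = f St.s0 + f St.s1 + f St.bot + f St.top := by
  rw [show (Finset.univ : Finset St) = {St.s0, St.s1, St.bot, St.top} from rfl]
  simp [Finset.sum_insert, Finset.mem_insert]
  ring

/-- The example blind MDP is not almost-sure winning under memoryless policies:
for every distribution `σ` on actions, the reachability probability
of `top` from `s0` is strictly less than `1`. -/
theorem not_almostSure_example (σ : Act → ℝ) (hσ0 : ∀ a, 0 ≤ σ a)
    (hσ1 : (∑ a, σ a) = 1) :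
    ReachProb (fun s s' => ∑ a, σ a * d s a s') St.top St.s0 < 1 := by
  set P : St → St → ℝ := fun s s' => ∑ a, σ a * d s a s' with hP
  set p := σ Act.w with hpw
  set q := σ Act.c with hqc
  have hp0 : 0 ≤ p := hσ0 _
  have hq0 : 0 ≤ q := hσ0 _
  have hsum : p + q = 1 := by rw [sum_Act] at hσ1; exact hσ1
  have hp1 : p ≤ 1 := by linarith
  -- entries of P
  have hPbot : ∀ s', P St.bot s' = if s' = St.bot then 1 else 0 := by
    intro s'; cases s' <;> simp [hP, sum_Act, d] <;> linarith
  have hAtop : ∀ n, reachAux P St.top n St.top = 1 := by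
    intro n; cases n <;> simp [reachAux]
  have hAbot : ∀ n, reachAux P St.top n St.bot = 0 := by
    intro n
    induction n with
    | zero => simp [reachAux]
    | succ n ih =>
      simp only [reachAux, if_neg (by simp : St.bot ≠ St.top)]
      rw [sum_St]
      simp [hPbot, ih]
  have hAs1 : ∀ n, reachAux P St.top n St.s1 ≤ 1 := by
    intro n
    induction n with
    | zero => simp [reachAux]
    | succ n ih =>
      simp only [reachAux, if_neg (by simp : St.s1 ≠ St.top)]
      rw [sum_St]
      have e0 : P St.s1 St.s0 = 0 := by simp [hP, sum_Act, d]
      have e1 : P St.s1 St.s1 = p := by simp [hP, sum_Act, d, hpw]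
      have e2 : P St.s1 St.bot = 0 := by simp [hP, sum_Act, d]
      have e3 : P St.s1 St.top = q := by simp [hP, sum_Act, d, hqc]
      rw [e0, e1, e2, e3, hAtop n, hAbot n]
      nlinarith [mul_le_mul_of_nonneg_left ih hp0]
  -- entries from s0
  have f0 : P St.s0 St.s0 = p / 2 := by simp [hP, sum_Act, d]; ring
  have f1 : P St.s0 St.s1 = p / 2 := by simp [hP, sum_Act, d]; ring
  have f2 : P St.s0 St.bot = q := by simp [hP, sum_Act, d, hqc]
  have f3 : P St.s0 St.top = 0 := by simp [hP, sum_Act, d]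
  have step : ∀ n, reachAux P St.top (n + 1) St.s0
      = p / 2 * reachAux P St.top n St.s0 + p / 2 * reachAux P St.top n St.s1 := by
    intro n
    simp only [reachAux, if_neg (by simp : St.s0 ≠ St.top)]
    rw [sum_St, f0, f1, f2, f3, hAbot n]
    ring
  rcases eq_or_lt_of_le hp1 with hpeq | hplt
  · -- p = 1, hence q = 0 and top is never reached
    have hq : q = 0 := by linarith
    have hz : ∀ n, reachAux P St.top n St.s0 = 0 ∧ reachAux P St.top n St.s1 = 0 := by
      intro n
      induction n with
      | zero => simp [reachAux]
      | succ n ih =>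
        constructor
        · rw [step n, ih.1, ih.2]; ring
        · simp only [reachAux, if_neg (by simp : St.s1 ≠ St.top)]
          rw [sum_St]
          have e0 : P St.s1 St.s0 = 0 := by simp [hP, sum_Act, d]
          have e2 : P St.s1 St.bot = 0 := by simp [hP, sum_Act, d]
          have e3 : P St.s1 St.top = q := by simp [hP, sum_Act, d, hqc]
          have e1 : P St.s1 St.s1 = p := by simp [hP, sum_Act, d, hpw]
          rw [e0, e1, e2, e3, ih.2, hq]; ring
    have : ReachProb P St.top St.s0 ≤ 0 := by
      apply ciSup_le
      intro n; rw [(hz n).1]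
    linarith
  · -- p < 1
    have h2p : (0:ℝ) < 2 - p := by linarith
    set B : ℝ := p / (2 - p) with hB
    have hB0 : 0 ≤ B := div_nonneg hp0 (le_of_lt h2p)
    have hBfix : p / 2 * B + p / 2 = B := by
      field_simp [hB]
      have hBm : B * (2 - p) = p := by rw [hB]; exact div_mul_cancel₀ p h2p.ne'
      linear_combination (-1 : ℝ) * hBm
    have hbound : ∀ n, reachAux P St.top n St.s0 ≤ B := by
      intro n
      induction n with
      | zero => simpa [reachAux] using hB0
      | succ n ih =>
        rw [step n]
        have h1 : p / 2 * reachAux P St.top n St.s0 ≤ p / 2 * B :=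
          mul_le_mul_of_nonneg_left ih (by linarith)
        have h2 : p / 2 * reachAux P St.top n St.s1 ≤ p / 2 :=
          by nlinarith [mul_le_mul_of_nonneg_left (hAs1 n) (show (0:ℝ) ≤ p / 2 by linarith)]
        linarith [hBfix]
    have hBlt : B < 1 := (div_lt_one h2p).mpr (by linarith)
    exact lt_of_le_of_lt (ciSup_le hbound) hBlt
end

section
/- Let (S, A, δ, Z, o, s₀) be a POMDP with target ⊤ ∈ S. Define the blind MDP on the same state space S with action set A × Z, initial state s₀, and transitions δ̃(s,(a,z)) := δ(s,a) if o(s) = z and the point mass at s otherwise. Then the reachability value under memoryless policies of the POMDP equals that of the blind MDP: ⨆ over memoryless policies σ : Z → Δ(A) of ReachProb(P_σ, ⊤, s₀) = ⨆ over probability distributions τ on A × Z of ReachProb(P̃_τ, ⊤, s₀), where P̃_τ(s,s') := Σ_{(a,z)} τ(a,z) · δ̃(s,(a,z))(s'). -/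
open scoped BigOperators

/-- Transition function of the blind MDP associated with a POMDP: action `(a, z)`
behaves like `a` on states with observation `z` and is a self-loop elsewhere. -/
noncomputable def blindTrans {S A Z : Type*} [DecidableEq S] [DecidableEq Z]
    (δ : S → A → S → ℝ) (o : S → Z) : S → A × Z → S → ℝ :=
  fun s p s' => if o s = p.2 then δ s p.1 s' else if s' = s then 1 else 0

section helpers
variable {S : Type*} [Fintype S] [DecidableEq S] (P : S → S → ℝ) (t : S)
variable (hP0 : ∀ x y, 0 ≤ P x y) (hP1 : ∀ x, (∑ y, P x y) = 1)
include hP0 hP1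
set_option linter.unusedSectionVars false

lemma reachAux_nonneg (n : ℕ) (x : S) : 0 ≤ reachAux P t n x := by
  induction n generalizing x with
  | zero => simp only [reachAux]; split <;> norm_num
  | succ n ih =>
    simp only [reachAux]; split
    · norm_num
    · exact Finset.sum_nonneg fun y _ => mul_nonneg (hP0 x y) (ih y)

lemma reachAux_le_one (n : ℕ) (x : S) : reachAux P t n x ≤ 1 := by
  induction n generalizing x with
  | zero => simp only [reachAux]; split <;> norm_num
  | succ n ih =>
    simp only [reachAux]; split
    · exact le_rfl
    · calc ∑ y, P x y * reachAux P t n y ≤ ∑ y, P x y * 1 :=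
          Finset.sum_le_sum fun y _ => mul_le_mul_of_nonneg_left (ih y) (hP0 x y)
        _ = 1 := by simp [hP1 x]

lemma reachAux_mono (n : ℕ) (x : S) : reachAux P t n x ≤ reachAux P t (n+1) x := by
  induction n generalizing x with
  | zero =>
    simp only [reachAux]
    split
    · exact le_rfl
    · exact Finset.sum_nonneg fun y _ => mul_nonneg (hP0 x y)
        (reachAux_nonneg P t hP0 hP1 0 y)
  | succ n ih =>
    simp only [reachAux]
    split
    · exact le_rfl
    · exact Finset.sum_le_sum fun y _ => mul_le_mul_of_nonneg_left (ih y) (hP0 x y)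

lemma reachAux_monotone (x : S) : Monotone fun n => reachAux P t n x :=
  monotone_nat_of_le_succ fun n => reachAux_mono P t hP0 hP1 n x

lemma reachAux_bdd (x : S) : BddAbove (Set.range fun n => reachAux P t n x) :=
  ⟨1, by rintro _ ⟨n, rfl⟩; exact reachAux_le_one P t hP0 hP1 n x⟩

lemma reachProb_le_one (x : S) : ReachProb P t x ≤ 1 :=
  ciSup_le fun n => reachAux_le_one P t hP0 hP1 n x

lemma reachProb_nonneg (x : S) : 0 ≤ ReachProb P t x :=
  le_trans (reachAux_nonneg P t hP0 hP1 0 x) (le_ciSup (reachAux_bdd P t hP0 hP1 x) 0)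

lemma reachProb_target : ReachProb P t t = 1 := by
  have : ∀ n, reachAux P t n t = 1 := by intro n; cases n <;> simp [reachAux]
  simp [ReachProb, this]

lemma reachProb_tendsto (x : S) :
    Filter.Tendsto (fun n => reachAux P t n x) Filter.atTop (nhds (ReachProb P t x)) :=
  tendsto_atTop_ciSup (reachAux_monotone P t hP0 hP1 x) (reachAux_bdd P t hP0 hP1 x)

lemma reachProb_fixed (x : S) (hx : x ≠ t) :
    ReachProb P t x = ∑ y, P x y * ReachProb P t y := by
  have h1 : Filter.Tendsto (fun n => reachAux P t (n+1) x) Filter.atTop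
      (nhds (ReachProb P t x)) :=
    (reachProb_tendsto P t hP0 hP1 x).comp (Filter.tendsto_add_atTop_nat 1)
  have h2 : Filter.Tendsto (fun n => ∑ y, P x y * reachAux P t n y) Filter.atTop
      (nhds (∑ y, P x y * ReachProb P t y)) :=
    tendsto_finset_sum _ fun y _ =>
      (reachProb_tendsto P t hP0 hP1 y).const_mul (P x y)
  have heq : (fun n => reachAux P t (n+1) x) = fun n => ∑ y, P x y * reachAux P t n y := by
    funext n; simp [reachAux, hx]
  rw [heq] at h1
  exact tendsto_nhds_unique h1 h2

lemma reachProb_le_of_prefixed (G : S → ℝ) (hG0 : ∀ y, 0 ≤ G y) (hGt : G t = 1)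
    (hfix : ∀ x, x ≠ t → (∑ y, P x y * G y) ≤ G x) (s : S) :
    ReachProb P t s ≤ G s := by
  have key : ∀ n x, reachAux P t n x ≤ G x := by
    intro n
    induction n with
    | zero =>
      intro x; simp only [reachAux]; split
      · next h => rw [h, hGt]
      · exact hG0 x
    | succ n ih =>
      intro x; simp only [reachAux]; split
      · next h => rw [h, hGt]
      · next h =>
        calc ∑ y, P x y * reachAux P t n y ≤ ∑ y, P x y * G y :=
            Finset.sum_le_sum fun y _ => mul_le_mul_of_nonneg_left (ih y) (hP0 x y)
          _ ≤ G x := hfix x h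
  exact ciSup_le fun n => key n s

end helpers

section lazy
variable {S : Type*} [Fintype S] [DecidableEq S] (P : S → S → ℝ) (t : S)
variable (hP0 : ∀ x y, 0 ≤ P x y) (hP1 : ∀ x, (∑ y, P x y) = 1)
variable (w : S → ℝ) (hw0 : ∀ s, 0 ≤ w s) (hw1 : ∀ s, w s ≤ 1)
include hP0 hP1 hw0 hw1
set_option linter.unusedSectionVars false

lemma lazy_nonneg : ∀ x y, 0 ≤ w x * P x y + (1 - w x) * (if y = x then 1 else 0) := by
  intro x y
  have := hw0 x; have := hw1 x
  have h1 : (0:ℝ) ≤ if y = x then (1:ℝ) else 0 := by split <;> norm_num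
  nlinarith [hP0 x y]

lemma lazy_stoch : ∀ x, (∑ y, (w x * P x y + (1 - w x) * (if y = x then 1 else 0))) = 1 := by
  intro x
  rw [Finset.sum_add_distrib, ← Finset.mul_sum, hP1 x, ← Finset.mul_sum]
  simp [Finset.sum_ite_eq']

lemma lazy_sum_eq (G : S → ℝ) (x : S) :
    (∑ y, (w x * P x y + (1 - w x) * (if y = x then 1 else 0)) * G y)
      = w x * (∑ y, P x y * G y) + (1 - w x) * G x := by
  have : ∀ y, (w x * P x y + (1 - w x) * (if y = x then 1 else 0)) * G y
      = w x * (P x y * G y) + (1 - w x) * ((if y = x then 1 else 0) * G y) := by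
    intro y; ring
  rw [Finset.sum_congr rfl fun y _ => this y, Finset.sum_add_distrib,
    ← Finset.mul_sum, ← Finset.mul_sum]
  congr 1
  congr 1
  simp [Finset.sum_ite_eq', ite_mul]

lemma lazy_le (s : S) :
    ReachProb (fun x y => w x * P x y + (1 - w x) * (if y = x then 1 else 0)) t s
      ≤ ReachProb P t s := by
  apply reachProb_le_of_prefixed _ t (lazy_nonneg P hP0 hP1 w hw0 hw1)
    (lazy_stoch P hP0 hP1 w hw0 hw1)
  · exact fun y => reachProb_nonneg P t hP0 hP1 y
  · exact reachProb_target P t hP0 hP1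
  · intro x hx
    rw [lazy_sum_eq P hP0 hP1 w hw0 hw1, ← reachProb_fixed P t hP0 hP1 x hx]
    ring_nf
    exact le_rfl

lemma lazy_ge (hwpos : ∀ s, 0 < w s) (s : S) :
    ReachProb P t s
      ≤ ReachProb (fun x y => w x * P x y + (1 - w x) * (if y = x then 1 else 0)) t s := by
  set Q : S → S → ℝ := fun x y => w x * P x y + (1 - w x) * (if y = x then 1 else 0) with hQ
  apply reachProb_le_of_prefixed P t hP0 hP1
  · exact fun y => reachProb_nonneg Q t (lazy_nonneg P hP0 hP1 w hw0 hw1)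
      (lazy_stoch P hP0 hP1 w hw0 hw1) y
  · exact reachProb_target Q t (lazy_nonneg P hP0 hP1 w hw0 hw1)
      (lazy_stoch P hP0 hP1 w hw0 hw1)
  · intro x hx
    have hfix := reachProb_fixed Q t (lazy_nonneg P hP0 hP1 w hw0 hw1)
      (lazy_stoch P hP0 hP1 w hw0 hw1) x hx
    rw [lazy_sum_eq P hP0 hP1 w hw0 hw1] at hfix
    -- hfix : G x = w x * (∑ y, P x y * G y) + (1 - w x) * G x
    have hw := hwpos x
    nlinarith [hfix]

end lazy

section blindsec
set_option linter.unusedSectionVars false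
variable {S A Z : Type*} [Fintype S] [Fintype A] [Fintype Z]
    [DecidableEq S] [DecidableEq Z]

lemma blind_sum (δ : S → A → S → ℝ) (o : S → Z)
    (τ : A × Z → ℝ) (hτ1 : (∑ p, τ p) = 1) (s s' : S) :
    (∑ p : A × Z, τ p * blindTrans δ o s p s') =
      (∑ a, τ (a, o s) * δ s a s')
        + (1 - ∑ a, τ (a, o s)) * (if s' = s then 1 else 0) := by
  set c : ℝ := if s' = s then (1:ℝ) else 0 with hc
  rw [Fintype.sum_prod_type_right]
  have key : ∀ z, (∑ a, τ (a, z) * blindTrans δ o s (a, z) s')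
      = (if z = o s then (∑ a, τ (a, o s) * δ s a s') - (∑ a, τ (a, o s)) * c else 0)
        + (∑ a, τ (a, z)) * c := by
    intro z
    by_cases h : z = o s
    · subst h
      simp only [blindTrans, eq_self_iff_true, if_true]
      rw [Finset.sum_mul]
      ring
    · have h' : ¬ (o s = z) := fun he => h he.symm
      simp only [blindTrans, if_neg h', if_neg h, Finset.sum_mul]
      ring_nf
      rw [hc]
  rw [Finset.sum_congr rfl fun z _ => key z, Finset.sum_add_distrib,
    Finset.sum_ite_eq' Finset.univ (o s)]
  have h2 : (∑ z, (∑ a, τ (a, z)) * c) = c := by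
    rw [← Finset.sum_mul, ← Fintype.sum_prod_type_right, hτ1, one_mul]
  rw [h2]
  simp only [Finset.mem_univ, if_pos]
  ring

variable (δ : S → A → S → ℝ)
    (hδ : ∀ s a, (∀ s', 0 ≤ δ s a s') ∧ (∑ s', δ s a s') = 1) (o : S → Z)
include hδ
set_option linter.unusedSectionVars false

lemma polP_nonneg (σ : Z → A → ℝ) (hσ0 : ∀ z a, 0 ≤ σ z a) :
    ∀ s s', 0 ≤ ∑ a, σ (o s) a * δ s a s' := fun s s' =>
  Finset.sum_nonneg fun a _ => mul_nonneg (hσ0 _ a) ((hδ s a).1 s')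

lemma polP_stoch (σ : Z → A → ℝ) (hσ1 : ∀ z, (∑ a, σ z a) = 1) :
    ∀ s, (∑ s', ∑ a, σ (o s) a * δ s a s') = 1 := by
  intro s
  rw [Finset.sum_comm]
  have : ∀ a, (∑ s', σ (o s) a * δ s a s') = σ (o s) a := by
    intro a; rw [← Finset.mul_sum, (hδ s a).2, mul_one]
  rw [Finset.sum_congr rfl fun a _ => this a, hσ1]

lemma blindP_nonneg (τ : A × Z → ℝ) (hτ0 : ∀ p, 0 ≤ τ p) :
    ∀ s s', 0 ≤ ∑ p : A × Z, τ p * blindTrans δ o s p s' := by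
  intro s s'
  refine Finset.sum_nonneg fun p _ => mul_nonneg (hτ0 p) ?_
  unfold blindTrans
  split
  · exact (hδ s p.1).1 s'
  · split <;> norm_num

lemma blindP_stoch (τ : A × Z → ℝ) (hτ1 : (∑ p, τ p) = 1) :
    ∀ s, (∑ s', ∑ p : A × Z, τ p * blindTrans δ o s p s') = 1 := by
  intro s
  rw [Finset.sum_comm]
  have : ∀ p : A × Z, (∑ s', τ p * blindTrans δ o s p s') = τ p := by
    intro p
    rw [← Finset.mul_sum]
    have : (∑ s', blindTrans δ o s p s') = 1 := by
      unfold blindTrans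
      split
      · exact (hδ s p.1).2
      · simp [Finset.sum_ite_eq' Finset.univ s]
    rw [this, mul_one]
  rw [Finset.sum_congr rfl fun p _ => this p, hτ1]

end blindsec


/-- The reachability value of the POMDP under memoryless policies equals the
reachability value of the associated blind MDP under memoryless policies. -/
theorem pomdp_eq_blind_value
    {S A Z : Type*} [Fintype S] [Fintype A] [Fintype Z]
    [DecidableEq S] [DecidableEq Z]
    [Nonempty S] [Nonempty A] [Nonempty Z]
    (δ : S → A → S → ℝ)
    (hδ : ∀ s a, (∀ s', 0 ≤ δ s a s') ∧ (∑ s', δ s a s') = 1)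
    (o : S → Z) (s₀ top : S) :
    sSup {x : ℝ | ∃ σ : Z → A → ℝ, (∀ z a, 0 ≤ σ z a) ∧ (∀ z, (∑ a, σ z a) = 1) ∧
        x = ReachProb (fun s s' => ∑ a, σ (o s) a * δ s a s') top s₀} =
    sSup {x : ℝ | ∃ τ : A × Z → ℝ, (∀ p, 0 ≤ τ p) ∧ (∑ p, τ p) = 1 ∧
        x = ReachProb (fun s s' => ∑ p : A × Z, τ p * blindTrans δ o s p s') top s₀} := by
  have hA : (0:ℝ) < Fintype.card A := by positivity
  have hZ : (0:ℝ) < Fintype.card Z := by positivity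
  -- nonemptiness of the two sets
  have hne1 : {x : ℝ | ∃ σ : Z → A → ℝ, (∀ z a, 0 ≤ σ z a) ∧ (∀ z, (∑ a, σ z a) = 1) ∧
      x = ReachProb (fun s s' => ∑ a, σ (o s) a * δ s a s') top s₀}.Nonempty := by
    refine ⟨_, fun _ _ => (Fintype.card A : ℝ)⁻¹, fun _ _ => by positivity, fun z => ?_, rfl⟩
    rw [Finset.sum_const, Finset.card_univ, nsmul_eq_mul, mul_inv_cancel₀ hA.ne']
  have hne2 : {x : ℝ | ∃ τ : A × Z → ℝ, (∀ p, 0 ≤ τ p) ∧ (∑ p, τ p) = 1 ∧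
      x = ReachProb (fun s s' => ∑ p : A × Z, τ p * blindTrans δ o s p s') top s₀}.Nonempty := by
    refine ⟨_, fun _ => (Fintype.card (A × Z) : ℝ)⁻¹, fun _ => by positivity, ?_, rfl⟩
    have : (0:ℝ) < Fintype.card (A × Z) := by positivity
    rw [Finset.sum_const, Finset.card_univ, nsmul_eq_mul, mul_inv_cancel₀ this.ne']
  -- boundedness
  have hbdd1 : BddAbove {x : ℝ | ∃ σ : Z → A → ℝ, (∀ z a, 0 ≤ σ z a) ∧ (∀ z, (∑ a, σ z a) = 1) ∧
      x = ReachProb (fun s s' => ∑ a, σ (o s) a * δ s a s') top s₀} := by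
    refine ⟨1, ?_⟩
    rintro x ⟨σ, hσ0, hσ1, rfl⟩
    exact reachProb_le_one _ top (polP_nonneg δ hδ o σ hσ0) (polP_stoch δ hδ o σ hσ1) s₀
  have hbdd2 : BddAbove {x : ℝ | ∃ τ : A × Z → ℝ, (∀ p, 0 ≤ τ p) ∧ (∑ p, τ p) = 1 ∧
      x = ReachProb (fun s s' => ∑ p : A × Z, τ p * blindTrans δ o s p s') top s₀} := by
    refine ⟨1, ?_⟩
    rintro x ⟨τ, hτ0, hτ1, rfl⟩
    exact reachProb_le_one _ top (blindP_nonneg δ hδ o τ hτ0) (blindP_stoch δ hδ o τ hτ1) s₀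
  apply le_antisymm
  · -- each POMDP value is also a blind value
    apply csSup_le_csSup hbdd2 hne1
    rintro x ⟨σ, hσ0, hσ1, rfl⟩
    set c : ℝ := (Fintype.card Z : ℝ)⁻¹ with hcdef
    have hc0 : 0 < c := by positivity
    have hc1 : c ≤ 1 := by
      rw [hcdef]
      apply inv_le_one_of_one_le₀
      exact_mod_cast Fintype.card_pos
    refine ⟨fun p => σ p.2 p.1 * c, fun p => mul_nonneg (hσ0 _ _) hc0.le, ?_, ?_⟩
    · rw [Fintype.sum_prod_type_right]
      have : ∀ z, (∑ a, σ z a * c) = c := by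
        intro z; rw [← Finset.sum_mul, hσ1 z, one_mul]
      rw [Finset.sum_congr rfl fun z _ => this z, Finset.sum_const, Finset.card_univ,
        nsmul_eq_mul, hcdef, mul_inv_cancel₀ hZ.ne']
    · -- value equality
      set P : S → S → ℝ := fun s s' => ∑ a, σ (o s) a * δ s a s' with hP
      have hP0 := polP_nonneg δ hδ o σ hσ0
      have hP1 := polP_stoch δ hδ o σ hσ1
      have hτ1 : (∑ p : A × Z, σ p.2 p.1 * c) = 1 := by
        rw [Fintype.sum_prod_type_right]
        have : ∀ z, (∑ a, σ z a * c) = c := by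
          intro z; rw [← Finset.sum_mul, hσ1 z, one_mul]
        rw [Finset.sum_congr rfl fun z _ => this z, Finset.sum_const, Finset.card_univ,
          nsmul_eq_mul, hcdef, mul_inv_cancel₀ hZ.ne']
      have hchain : (fun s s' => ∑ p : A × Z, (σ p.2 p.1 * c) * blindTrans δ o s p s')
          = fun s s' => c * P s s' + (1 - c) * (if s' = s then 1 else 0) := by
        funext s s'
        rw [blind_sum δ o _ hτ1 s s']
        have h1 : (∑ a, (σ (o s) a * c) * δ s a s') = c * P s s' := by
          rw [hP, Finset.mul_sum]
          exact Finset.sum_congr rfl fun a _ => by ring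
        have h2 : (∑ a, σ (o s) a * c) = c := by
          rw [← Finset.sum_mul, hσ1, one_mul]
        rw [h1, h2]
      rw [hchain]
      exact le_antisymm
        (lazy_ge P top hP0 hP1 (fun _ => c) (fun _ => hc0.le) (fun _ => hc1)
          (fun _ => hc0) s₀)
        (lazy_le P top hP0 hP1 (fun _ => c) (fun _ => hc0.le) (fun _ => hc1) s₀)
  · -- each blind value is at most some POMDP value
    apply csSup_le hne2
    rintro x ⟨τ, hτ0, hτ1, rfl⟩
    set w : Z → ℝ := fun z => ∑ a, τ (a, z) with hwdef
    have hw0 : ∀ z, 0 ≤ w z := fun z => Finset.sum_nonneg fun a _ => hτ0 _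
    have hw1 : ∀ z, w z ≤ 1 := by
      intro z
      have : (∑ z', w z') = 1 := by
        rw [hwdef, ← Fintype.sum_prod_type_right, hτ1]
      calc w z ≤ ∑ z', w z' :=
            Finset.single_le_sum (fun z' _ => hw0 z') (Finset.mem_univ z)
        _ = 1 := this
    set σ : Z → A → ℝ := fun z a => if w z = 0 then (Fintype.card A : ℝ)⁻¹
        else τ (a, z) / w z with hσdef
    have hσ0 : ∀ z a, 0 ≤ σ z a := by
      intro z a
      simp only [hσdef]
      split
      · positivity
      · exact div_nonneg (hτ0 _) (hw0 z)
    have hσ1 : ∀ z, (∑ a, σ z a) = 1 := by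
      intro z
      by_cases h : w z = 0
      · have he : ∀ a : A, σ z a = (Fintype.card A : ℝ)⁻¹ := by
          intro a; simp [hσdef, h]
        rw [Finset.sum_congr rfl fun a _ => he a, Finset.sum_const, Finset.card_univ,
          nsmul_eq_mul, mul_inv_cancel₀ hA.ne']
      · have he : ∀ a : A, σ z a = τ (a, z) / w z := by
          intro a; simp [hσdef, h]
        rw [Finset.sum_congr rfl fun a _ => he a, ← Finset.sum_div,
          show (∑ a, τ (a, z)) = w z from rfl, div_self h]
    set P : S → S → ℝ := fun s s' => ∑ a, σ (o s) a * δ s a s' with hP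
    have hP0 := polP_nonneg δ hδ o σ hσ0
    have hP1 := polP_stoch δ hδ o σ hσ1
    have hchain : (fun s s' => ∑ p : A × Z, τ p * blindTrans δ o s p s')
        = fun s s' => w (o s) * P s s' + (1 - w (o s)) * (if s' = s then 1 else 0) := by
      funext s s'
      rw [blind_sum δ o τ hτ1 s s']
      have h1 : (∑ a, τ (a, o s) * δ s a s') = w (o s) * P s s' := by
        by_cases h : w (o s) = 0
        · have hzero : ∀ a, τ (a, o s) = 0 := fun a =>
            (Finset.sum_eq_zero_iff_of_nonneg
              (fun a _ => hτ0 (a, o s))).1 h a (Finset.mem_univ a)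
          simp only [hzero, zero_mul, Finset.sum_const_zero, h, zero_mul]
        · rw [hP, Finset.mul_sum]
          refine Finset.sum_congr rfl fun a _ => ?_
          rw [hσdef]
          simp only [if_neg h]
          field_simp
      rw [h1, show (∑ a, τ (a, o s)) = w (o s) from rfl]
    rw [hchain]
    calc ReachProb (fun s s' => w (o s) * P s s' + (1 - w (o s)) *
            (if s' = s then 1 else 0)) top s₀
        ≤ ReachProb P top s₀ :=
          lazy_le P top hP0 hP1 (fun s => w (o s)) (fun s => hw0 (o s))
            (fun s => hw1 (o s)) s₀
      _ ≤ _ := le_csSup hbdd1 ⟨σ, hσ0, hσ1, rfl⟩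
end

section
/- Fix n ≥ 1 variables and m ≥ 1 clauses of a 3-SAT instance given by c : Fin m → Fin 3 → Fin n × Bool. Consider the associated POMDP constructed from this instance. Then the supremum over memoryless policies σ : Z → Δ(A) of ReachProb(P_σ, ⊤, s₀) equals 1 if and only if there exists an assignment v : Fin n → Bool satisfying every clause, i.e., for every j ∈ Fin m there exists k ∈ Fin 3 with v((c j k).1) = (c j k).2. -/
open scoped BigOperators

/-- The three special states/observations of the 3-SAT POMDP. -/
inductive Sp | start | target | sink
  deriving DecidableEq

instance : Fintype Sp where
  elems := {Sp.start, Sp.target, Sp.sink}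
  complete := by intro x; cases x <;> simp

/-- Transition function of the POMDP associated with a 3-SAT instance
`c : Fin m → Fin 3 → Fin n × Bool`. -/
noncomputable def satTrans (n m : ℕ) (c : Fin m → Fin 3 → Fin n × Bool) :
    (Fin m × Fin 3) ⊕ Sp → Bool → ((Fin m × Fin 3) ⊕ Sp) → ℝ :=
  fun s a s' =>
    match s with
    | Sum.inr Sp.start =>
        match s' with
        | Sum.inl (_, k) => if k = (0 : Fin 3) then (1 : ℝ) / m else 0
        | Sum.inr _ => 0
    | Sum.inr Sp.target => if s' = Sum.inr Sp.target then 1 else 0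
    | Sum.inr Sp.sink => if s' = Sum.inr Sp.sink then 1 else 0
    | Sum.inl (j, k) =>
        if a = (c j k).2 then (if s' = Sum.inr Sp.target then 1 else 0)
        else if (k : ℕ) < 2 then (if s' = Sum.inl (j, k + 1) then 1 else 0)
        else if s' = Sum.inr Sp.sink then 1 else 0

/-- Observation function of the POMDP associated with a 3-SAT instance. -/
def satObs (n m : ℕ) (c : Fin m → Fin 3 → Fin n × Bool) :
    (Fin m × Fin 3) ⊕ Sp → Fin n ⊕ Sp
  | Sum.inl (j, k) => Sum.inl (c j k).1
  | Sum.inr x => Sum.inr x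

section Aux

lemma reachAux_target {S : Type*} [Fintype S] [DecidableEq S] (P : S → S → ℝ) (t : S) :
    ∀ N, reachAux P t N t = 1 := by
  intro N; cases N <;> simp [reachAux]

lemma reachAux_le_one_s14 {S : Type*} [Fintype S] [DecidableEq S] {P : S → S → ℝ} {t : S}
    (h0 : ∀ x y, 0 ≤ P x y) (h1 : ∀ x, ∑ y, P x y = 1) :
    ∀ N x, reachAux P t N x ≤ 1
  | 0, x => by simp only [reachAux]; split <;> norm_num
  | N+1, x => by
    simp only [reachAux]
    split
    · exact le_refl _
    · calc ∑ y, P x y * reachAux P t N y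
          ≤ ∑ y, P x y * 1 :=
            Finset.sum_le_sum fun y _ =>
              mul_le_mul_of_nonneg_left (reachAux_le_one_s14 h0 h1 N y) (h0 x y)
        _ = 1 := by simp [h1 x]

variable {n m : ℕ} (c : Fin m → Fin 3 → Fin n × Bool)

noncomputable def Pσ (σ : (Fin n ⊕ Sp) → Bool → ℝ) :
    ((Fin m × Fin 3) ⊕ Sp) → ((Fin m × Fin 3) ⊕ Sp) → ℝ :=
  fun s s' => ∑ a, σ (satObs n m c s) a * satTrans n m c s a s'

lemma satTrans_target (a : Bool) (s') :
    satTrans n m c (Sum.inr Sp.target) a s' = if s' = Sum.inr Sp.target then 1 else 0 := rfl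

lemma satTrans_sink (a : Bool) (s') :
    satTrans n m c (Sum.inr Sp.sink) a s' = if s' = Sum.inr Sp.sink then 1 else 0 := rfl

lemma satTrans_lit (j : Fin m) (k : Fin 3) (a : Bool) (s') :
    satTrans n m c (Sum.inl (j, k)) a s' =
      if s' = (if a = (c j k).2 then Sum.inr Sp.target
        else if (k : ℕ) < 2 then Sum.inl (j, k + 1) else Sum.inr Sp.sink) then 1 else 0 := by
  by_cases h1 : a = (c j k).2 <;> by_cases h2 : (k : ℕ) < 2 <;> simp [satTrans, h1, h2]

lemma Pσ_row_ind (σ : (Fin n ⊕ Sp) → Bool → ℝ) (x) (dest : Bool → ((Fin m × Fin 3) ⊕ Sp))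
    (hd : ∀ a s', satTrans n m c x a s' = if s' = dest a then 1 else 0)
    (h : ((Fin m × Fin 3) ⊕ Sp) → ℝ) :
    ∑ y, Pσ c σ x y * h y = ∑ a, σ (satObs n m c x) a * h (dest a) := by
  simp only [Pσ, hd, Finset.sum_mul]
  rw [Finset.sum_comm]
  refine Finset.sum_congr rfl fun a _ => ?_
  simp [mul_ite, ite_mul, Finset.sum_ite_eq']



lemma reachAux_succ {S : Type*} [Fintype S] [DecidableEq S] (P : S → S → ℝ) (t : S)
    (N : ℕ) (x : S) (hx : x ≠ t) :
    reachAux P t (N+1) x = ∑ y, P x y * reachAux P t N y := by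
  simp only [reachAux]; rw [if_neg hx]

lemma reachAux_sink (σ : (Fin n ⊕ Sp) → Bool → ℝ) :
    ∀ N, reachAux (Pσ c σ) (Sum.inr Sp.target) N (Sum.inr Sp.sink) = 0
  | 0 => by simp [reachAux]
  | N+1 => by
    simp only [reachAux]
    rw [if_neg (by simp), Pσ_row_ind c σ _ (fun _ => Sum.inr Sp.sink) (satTrans_sink c)]
    simp [reachAux_sink σ N]

lemma satTrans_start_indep (a : Bool) (y) :
    satTrans n m c (Sum.inr Sp.start) a y = satTrans n m c (Sum.inr Sp.start) true y := rfl

lemma start_step (σ : (Fin n ⊕ Sp) → Bool → ℝ) (hσ1 : ∀ z, (∑ a, σ z a) = 1)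
    (h : ((Fin m × Fin 3) ⊕ Sp) → ℝ) :
    ∑ y, Pσ c σ (Sum.inr Sp.start) y * h y = (1 / m) * ∑ j : Fin m, h (Sum.inl (j, 0)) := by
  have key : ∀ y, Pσ c σ (Sum.inr Sp.start) y = satTrans n m c (Sum.inr Sp.start) true y := by
    intro y
    simp only [Pσ]
    calc (∑ a, σ (satObs n m c (Sum.inr Sp.start)) a * satTrans n m c (Sum.inr Sp.start) a y)
        = (∑ a, σ (satObs n m c (Sum.inr Sp.start)) a) * satTrans n m c (Sum.inr Sp.start) true y := by
          rw [Finset.sum_mul]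
          exact Finset.sum_congr rfl fun a _ => rfl
      _ = satTrans n m c (Sum.inr Sp.start) true y := by rw [hσ1]; ring
  simp only [key]
  rw [Fintype.sum_sum_type]
  have h2 : ∀ x : Sp, satTrans n m c (Sum.inr Sp.start) true (Sum.inr x) = 0 := fun x => rfl
  simp only [h2, zero_mul, Finset.sum_const_zero, add_zero]
  rw [Fintype.sum_prod_type]
  have h3 : ∀ (j : Fin m) (k : Fin 3), satTrans n m c (Sum.inr Sp.start) true (Sum.inl (j, k))
      = if k = 0 then (1:ℝ)/m else 0 := fun j k => rfl
  simp only [h3, ite_mul, zero_mul, Finset.sum_ite_eq', Finset.mem_univ, if_true]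
  rw [Finset.mul_sum]

lemma lit_step (σ : (Fin n ⊕ Sp) → Bool → ℝ) (j : Fin m) (k : Fin 3)
    (h : ((Fin m × Fin 3) ⊕ Sp) → ℝ) :
    ∑ y, Pσ c σ (Sum.inl (j, k)) y * h y
      = σ (Sum.inl (c j k).1) ((c j k).2) * h (Sum.inr Sp.target)
        + σ (Sum.inl (c j k).1) (!(c j k).2)
            * h (if (k : ℕ) < 2 then Sum.inl (j, k + 1) else Sum.inr Sp.sink) := by
  rw [Pσ_row_ind c σ _ (fun a => if a = (c j k).2 then Sum.inr Sp.target
      else if (k : ℕ) < 2 then Sum.inl (j, k + 1) else Sum.inr Sp.sink) (satTrans_lit c j k)]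
  have hobs : satObs n m c (Sum.inl (j, k)) = Sum.inl (c j k).1 := rfl
  rw [hobs, Fintype.sum_bool]
  cases hb : (c j k).2 <;> simp <;> ring

lemma satTrans_nonneg (s a s') : 0 ≤ satTrans n m c s a s' := by
  rcases s with ⟨j, k⟩ | x
  · rw [satTrans_lit]; split_ifs <;> norm_num
  · cases x
    · rcases s' with ⟨j, k⟩ | x
      · show (0:ℝ) ≤ if _ then _ else _
        split <;> positivity
      · exact le_refl _
    · rw [satTrans_target]; split <;> norm_num
    · rw [satTrans_sink]; split <;> norm_num

lemma satTrans_rowsum (hm : 1 ≤ m) (s) (a : Bool) : ∑ s', satTrans n m c s a s' = 1 := by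
  have hm0 : (m:ℝ) ≠ 0 := Nat.cast_ne_zero.mpr (by omega)
  rcases s with ⟨j, k⟩ | x
  · simp only [satTrans_lit]
    simp [Finset.sum_ite_eq']
  · cases x
    · rw [Fintype.sum_sum_type]
      have h2 : ∀ x : Sp, satTrans n m c (Sum.inr Sp.start) a (Sum.inr x) = 0 := fun x => rfl
      have h3 : ∀ (j : Fin m) (k : Fin 3), satTrans n m c (Sum.inr Sp.start) a (Sum.inl (j, k))
          = if k = 0 then (1:ℝ)/m else 0 := fun j k => rfl
      simp only [h2, h3, Finset.sum_const_zero, add_zero, Fintype.sum_prod_type]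
      simp [Finset.sum_ite_eq', Finset.card_univ]
      field_simp
    · simp only [satTrans_target]; simp [Finset.sum_ite_eq']
    · simp only [satTrans_sink]; simp [Finset.sum_ite_eq']

lemma Pσ_nonneg (σ : (Fin n ⊕ Sp) → Bool → ℝ) (hσ0 : ∀ z a, 0 ≤ σ z a) (s s') :
    0 ≤ Pσ c σ s s' :=
  Finset.sum_nonneg fun a _ => mul_nonneg (hσ0 _ a) (satTrans_nonneg c s a s')

lemma Pσ_rowsum (hm : 1 ≤ m) (σ : (Fin n ⊕ Sp) → Bool → ℝ) (hσ1 : ∀ z, (∑ a, σ z a) = 1) (s) :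
    ∑ s', Pσ c σ s s' = 1 := by
  simp only [Pσ]
  rw [Finset.sum_comm]
  calc (∑ a, ∑ s', σ (satObs n m c s) a * satTrans n m c s a s')
      = ∑ a : Bool, σ (satObs n m c s) a := by
        refine Finset.sum_congr rfl fun a _ => ?_
        rw [← Finset.mul_sum, satTrans_rowsum c hm, mul_one]
    _ = 1 := hσ1 _

end Aux


/-- The POMDP associated with a 3-SAT instance is limit-sure winning for
reaching the target under memoryless policies iff the 3-SAT instance is
satisfiable. -/
theorem satPOMDP_limitSure_iff_satisfiable (n m : ℕ) (hn : 1 ≤ n) (hm : 1 ≤ m)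
    (c : Fin m → Fin 3 → Fin n × Bool) :
    sSup {x : ℝ | ∃ σ : (Fin n ⊕ Sp) → Bool → ℝ,
        (∀ z a, 0 ≤ σ z a) ∧ (∀ z, (∑ a, σ z a) = 1) ∧
        x = ReachProb
          (fun s s' => ∑ a, σ (satObs n m c s) a * satTrans n m c s a s')
          (Sum.inr Sp.target) (Sum.inr Sp.start)} = 1 ↔
    ∃ v : Fin n → Bool, ∀ j : Fin m, ∃ k : Fin 3, v (c j k).1 = (c j k).2 := by
  classical
  have hm1 : (1:ℝ) ≤ (m:ℝ) := by exact_mod_cast hm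
  have hm0 : (0:ℝ) < (m:ℝ) := by linarith
  constructor
  · intro hsup
    by_contra hunsat
    push_neg at hunsat
    have hbound : ∀ x ∈ {x : ℝ | ∃ σ : (Fin n ⊕ Sp) → Bool → ℝ,
        (∀ z a, 0 ≤ σ z a) ∧ (∀ z, (∑ a, σ z a) = 1) ∧
        x = ReachProb
          (fun s s' => ∑ a, σ (satObs n m c s) a * satTrans n m c s a s')
          (Sum.inr Sp.target) (Sum.inr Sp.start)}, x ≤ 1 - 1/(8*m) := by
      rintro x ⟨σ, hσ0, hσ1, rfl⟩
      set v : Fin n → Bool := fun i => if 1/2 ≤ σ (Sum.inl i) true then true else false with hvdef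
      obtain ⟨j, hj⟩ := hunsat v
      have hsumb : ∀ z, σ z true + σ z false = 1 := by
        intro z; have := hσ1 z; rwa [Fintype.sum_bool] at this
      have hple : ∀ k : Fin 3, σ (Sum.inl (c j k).1) ((c j k).2) ≤ 1/2 := by
        intro k
        have hjk := hj k
        have hs := hsumb (Sum.inl (c j k).1)
        cases hb : (c j k).2 with
        | true =>
          rw [hb] at hjk
          have : ¬ (1/2 ≤ σ (Sum.inl (c j k).1) true) := by
            intro hle
            apply hjk
            simp only [hvdef]
            rw [if_pos hle]
          linarith [not_le.mp this]
        | false =>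
          rw [hb] at hjk
          have : (1/2 ≤ σ (Sum.inl (c j k).1) true) := by
            by_contra hle
            apply hjk
            simp only [hvdef]
            rw [if_neg hle]
          linarith
      have hqeq : ∀ k : Fin 3, σ (Sum.inl (c j k).1) (!(c j k).2)
          = 1 - σ (Sum.inl (c j k).1) ((c j k).2) := by
        intro k
        have hs := hsumb (Sum.inl (c j k).1)
        cases hb : (c j k).2 <;> simp <;> linarith
      have hle1 := reachAux_le_one_s14 (t := Sum.inr Sp.target)
        (Pσ_nonneg c σ hσ0) (Pσ_rowsum c hm σ hσ1)
      have h2 : ∀ N, reachAux (Pσ c σ) (Sum.inr Sp.target) N (Sum.inl (j, 2)) ≤ 1/2 := by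
        intro N
        cases N with
        | zero => simp only [reachAux]; rw [if_neg (by simp)]; norm_num
        | succ N =>
          rw [reachAux_succ _ _ _ _ (by simp), lit_step c σ,
            if_neg (show ¬(((2:Fin 3):ℕ) < 2) by decide)]
          rw [reachAux_target, reachAux_sink, mul_one, mul_zero, add_zero]
          exact hple 2
      have h1 : ∀ N, reachAux (Pσ c σ) (Sum.inr Sp.target) N (Sum.inl (j, 1)) ≤ 3/4 := by
        intro N
        cases N with
        | zero => simp only [reachAux]; rw [if_neg (by simp)]; norm_num
        | succ N =>
          rw [reachAux_succ _ _ _ _ (by simp), lit_step c σ,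
            if_pos (show (((1:Fin 3):ℕ) < 2) by decide),
            show (1:Fin 3) + 1 = 2 by decide]
          rw [reachAux_target, mul_one]
          nlinarith [hple 1, hqeq 1, h2 N, hσ0 (Sum.inl (c j 1).1) (!(c j 1).2)]
      have h0 : ∀ N, reachAux (Pσ c σ) (Sum.inr Sp.target) N (Sum.inl (j, 0)) ≤ 7/8 := by
        intro N
        cases N with
        | zero => simp only [reachAux]; rw [if_neg (by simp)]; norm_num
        | succ N =>
          rw [reachAux_succ _ _ _ _ (by simp), lit_step c σ,
            if_pos (show (((0:Fin 3):ℕ) < 2) by decide),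
            show (0:Fin 3) + 1 = 1 by decide]
          rw [reachAux_target, mul_one]
          nlinarith [hple 0, hqeq 0, h1 N, hσ0 (Sum.inl (c j 0).1) (!(c j 0).2)]
      have hstart : ∀ N, reachAux (Pσ c σ) (Sum.inr Sp.target) N (Sum.inr Sp.start)
          ≤ 1 - 1/(8*m) := by
        intro N
        cases N with
        | zero =>
          simp only [reachAux]; rw [if_neg (by simp)]
          rw [sub_nonneg, div_le_one (by linarith)]; linarith
        | succ N =>
          rw [reachAux_succ _ _ _ _ (by simp), start_step c σ hσ1]
          have hsum : ∑ j' : Fin m, reachAux (Pσ c σ) (Sum.inr Sp.target) N (Sum.inl (j', 0))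
              ≤ (m:ℝ) - 1/8 := by
            calc ∑ j' : Fin m, reachAux (Pσ c σ) (Sum.inr Sp.target) N (Sum.inl (j', 0))
                ≤ ∑ j' : Fin m, (1 - if j' = j then (1/8:ℝ) else 0) := by
                  refine Finset.sum_le_sum fun j' _ => ?_
                  by_cases hjj : j' = j
                  · rw [if_pos hjj, hjj]; linarith [h0 N]
                  · rw [if_neg hjj, sub_zero]; exact hle1 N _
              _ = (m:ℝ) - 1/8 := by
                  rw [Finset.sum_sub_distrib]
                  simp [Finset.sum_ite_eq', Finset.card_univ]
          calc (1/(m:ℝ)) * ∑ j' : Fin m, reachAux (Pσ c σ) (Sum.inr Sp.target) N (Sum.inl (j', 0))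
              ≤ (1/(m:ℝ)) * ((m:ℝ) - 1/8) :=
                mul_le_mul_of_nonneg_left hsum (by positivity)
            _ = 1 - 1/(8*m) := by field_simp
      exact ciSup_le hstart
    have hle : sSup {x : ℝ | ∃ σ : (Fin n ⊕ Sp) → Bool → ℝ,
        (∀ z a, 0 ≤ σ z a) ∧ (∀ z, (∑ a, σ z a) = 1) ∧
        x = ReachProb
          (fun s s' => ∑ a, σ (satObs n m c s) a * satTrans n m c s a s')
          (Sum.inr Sp.target) (Sum.inr Sp.start)} ≤ 1 - 1/(8*m) := by
      apply Real.sSup_le hbound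
      rw [sub_nonneg, div_le_one (by linarith)]; linarith
    rw [hsup] at hle
    have : 0 < 1/(8*(m:ℝ)) := by positivity
    linarith
  · rintro ⟨v, hv⟩
    set σ : (Fin n ⊕ Sp) → Bool → ℝ :=
      fun z a => if a = Sum.elim v (fun _ => true) z then 1 else 0 with hσdef
    have hσ0 : ∀ z a, 0 ≤ σ z a := by
      intro z a; simp only [hσdef]; split <;> norm_num
    have hσ1 : ∀ z, (∑ a, σ z a) = 1 := by
      intro z; rw [Fintype.sum_bool]; simp only [hσdef]
      cases (Sum.elim v (fun _ => true) z) <;> norm_num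
    have hle1 := reachAux_le_one_s14 (t := Sum.inr Sp.target)
      (Pσ_nonneg c σ hσ0) (Pσ_rowsum c hm σ hσ1)
    have hlitT : ∀ (N : ℕ) (j : Fin m) (k : Fin 3), v (c j k).1 = (c j k).2 →
        reachAux (Pσ c σ) (Sum.inr Sp.target) (N+1) (Sum.inl (j, k)) = 1 := by
      intro N j k hmatch
      rw [reachAux_succ _ _ _ _ (by simp), lit_step c σ]
      have e1 : σ (Sum.inl (c j k).1) ((c j k).2) = 1 := by
        simp [hσdef, hmatch]
      have e2 : σ (Sum.inl (c j k).1) (!(c j k).2) = 0 := by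
        simp [hσdef, hmatch]
      rw [e1, e2, reachAux_target]; ring
    have hlitF : ∀ (N : ℕ) (j : Fin m) (k : Fin 3), v (c j k).1 ≠ (c j k).2 →
        reachAux (Pσ c σ) (Sum.inr Sp.target) (N+1) (Sum.inl (j, k))
          = reachAux (Pσ c σ) (Sum.inr Sp.target) N
              (if (k : ℕ) < 2 then Sum.inl (j, k + 1) else Sum.inr Sp.sink) := by
      intro N j k hmatch
      rw [reachAux_succ _ _ _ _ (by simp), lit_step c σ]
      have e1 : σ (Sum.inl (c j k).1) ((c j k).2) = 0 := by
        simp [hσdef, hmatch, Ne.symm hmatch]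
      have e2 : σ (Sum.inl (c j k).1) (!(c j k).2) = 1 := by
        simp [hσdef]; intro h; exact absurd h.symm hmatch
      rw [e1, e2]; ring
    have hj0 : ∀ j : Fin m, reachAux (Pσ c σ) (Sum.inr Sp.target) 3 (Sum.inl (j, 0)) = 1 := by
      intro j
      by_cases hc0 : v (c j 0).1 = (c j 0).2
      · exact hlitT 2 j 0 hc0
      · rw [hlitF 2 j 0 hc0, if_pos (show (((0:Fin 3):ℕ) < 2) by decide),
          show (0:Fin 3) + 1 = 1 by decide]
        by_cases hc1 : v (c j 1).1 = (c j 1).2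
        · exact hlitT 1 j 1 hc1
        · rw [hlitF 1 j 1 hc1, if_pos (show (((1:Fin 3):ℕ) < 2) by decide),
            show (1:Fin 3) + 1 = 2 by decide]
          have hc2 : v (c j 2).1 = (c j 2).2 := by
            obtain ⟨k, hk⟩ := hv j
            fin_cases k
            · exact absurd hk hc0
            · exact absurd hk hc1
            · exact hk
          exact hlitT 0 j 2 hc2
    have h4 : reachAux (Pσ c σ) (Sum.inr Sp.target) 4 (Sum.inr Sp.start) = 1 := by
      rw [show (4:ℕ) = 3 + 1 from rfl, reachAux_succ _ _ _ _ (by simp), start_step c σ hσ1]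
      rw [Finset.sum_congr rfl fun j _ => hj0 j]
      simp [Finset.card_univ]
      field_simp
    have hRP : ReachProb (Pσ c σ) (Sum.inr Sp.target) (Sum.inr Sp.start) = 1 := by
      apply le_antisymm
      · exact ciSup_le fun N => hle1 N _
      · exact le_ciSup_of_le ⟨1, by rintro y ⟨N, rfl⟩; exact hle1 N _⟩ 4 (le_of_eq h4.symm)
    apply le_antisymm
    · apply Real.sSup_le _ zero_le_one
      rintro x ⟨σ', h0', h1', rfl⟩
      exact ciSup_le (fun N => reachAux_le_one_s14 (Pσ_nonneg c σ' h0') (Pσ_rowsum c hm σ' h1') N _)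
    · apply le_csSup
      · refine ⟨1, ?_⟩
        rintro x ⟨σ', h0', h1', rfl⟩
        exact ciSup_le (fun N => reachAux_le_one_s14 (Pσ_nonneg c σ' h0') (Pσ_rowsum c hm σ' h1') N _)
      · exact ⟨σ, hσ0, hσ1, hRP.symm⟩
end
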